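/- Let m,n ∈ ℕ, η > 0, and define T ⊂ ℤ^{m+n} to be the set of tuples t = (u₁−⌊ξ⌋,…,u_m−⌊ξ⌋, v₁+⌊ξ⌋,…,v_n+⌊ξ⌋) over all u ∈ ℤ₊^m, v ∈ ℤ₊^n with σ(u) ≥ η σ(v), where ξ = (σ(u)−ησ(v))/(m+ηn). Then for every τ > 0, the series Σ_{t ∈ T} e^{−τσ(t)} converges. -/

import Mathlib

open scoped BigOperators Classical

noncomputable section

/-- `σ(u)`, the sum of the coordinates of a tuple of nonnegative integers, as a real. -/
def sigmaN {m : ℕ} (u : Fin m → ℕ) : ℝ := ∑ j, (u j : ℝ)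

/-- `ξ = (σ(u) - η σ(v)) / (m + η n)`. -/
def xiR (m n : ℕ) (η su sv : ℝ) : ℝ := (su - η * sv) / ((m : ℝ) + η * n)

/-- The tuple `t = (u₁-⌊ξ⌋, …, u_m-⌊ξ⌋, v₁+⌊ξ⌋, …, v_n+⌊ξ⌋)`. -/
def tvec (m n : ℕ) (η : ℝ) (u : Fin m → ℕ) (v : Fin n → ℕ) : Fin m ⊕ Fin n → ℤ :=
  Sum.elim (fun j => (u j : ℤ) - ⌊xiR m n η (sigmaN u) (sigmaN v)⌋)
           (fun i => (v i : ℤ) + ⌊xiR m n η (sigmaN u) (sigmaN v)⌋)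

/-- `σ(t)`, the sum of the coordinates of an integer tuple, as a real. -/
def sigmaZ {m n : ℕ} (t : Fin m ⊕ Fin n → ℤ) : ℝ := ∑ k, (t k : ℝ)

/-- The index set `T ⊆ ℤ^{m+n}` of the transference construction. -/
def Tset (m n : ℕ) (η : ℝ) : Set (Fin m ⊕ Fin n → ℤ) :=
  {t | ∃ (u : Fin m → ℕ) (v : Fin n → ℕ), η * sigmaN v ≤ sigmaN u ∧ t = tvec m n η u v}

lemma summable_pow_sum (m : ℕ) (r : ℝ) (hr0 : 0 ≤ r) (hr1 : r < 1) :
    Summable (fun u : Fin m → ℕ => r ^ (∑ j, u j)) := by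
  induction m with
  | zero => exact Summable.of_finite
  | succ k ih =>
    have h := Summable.mul_of_nonneg (summable_geometric_of_lt_one hr0 hr1) ih
        (Pi.le_def.mpr fun a => pow_nonneg hr0 a) (Pi.le_def.mpr fun u => pow_nonneg hr0 _)
    have h2 : Summable (fun p : ℕ × (Fin k → ℕ) =>
        (fun u : Fin (k+1) → ℕ => r ^ (∑ j, u j)) ((Fin.consEquiv (fun _ : Fin (k+1) => ℕ)) p)) := by
      refine h.congr fun p => ?_
      simp [Fin.sum_univ_succ, pow_add]
    exact (Fin.consEquiv (fun _ : Fin (k+1) => ℕ)).summable_iff.mp h2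

lemma sigmaZ_tvec (m n : ℕ) (η : ℝ) (u : Fin m → ℕ) (v : Fin n → ℕ) :
    sigmaZ (tvec m n η u v) =
      sigmaN u + sigmaN v +
        ((n : ℝ) - m) * (⌊xiR m n η (sigmaN u) (sigmaN v)⌋ : ℝ) := by
  simp only [sigmaZ, tvec, Fintype.sum_sum_type, Sum.elim_inl, Sum.elim_inr]
  push_cast
  rw [Finset.sum_sub_distrib, Finset.sum_add_distrib]
  simp only [sigmaN, Finset.sum_const, Finset.card_univ, Fintype.card_fin, nsmul_eq_mul]
  ring

/-- The key pointwise bound. -/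
lemma key_bound (m n : ℕ) (hm : 0 < m) (hn : 0 < n) (η : ℝ) (hη : 0 < η)
    (τ : ℝ) (hτ : 0 < τ) (u : Fin m → ℕ) (v : Fin n → ℕ) :
    Real.exp (-τ * sigmaZ (tvec m n η u v)) ≤
      Real.exp (τ * (m + n)) *
        Real.exp (-(τ * (η + 1) / ((m : ℝ) + η * n)) * ((n : ℝ) * sigmaN u))
        * Real.exp (-(τ * (η + 1) / ((m : ℝ) + η * n)) * ((m : ℝ) * sigmaN v)) := by
  rw [← Real.exp_add, ← Real.exp_add, Real.exp_le_exp]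
  set su := sigmaN u with hsu
  set sv := sigmaN v with hsv
  set ξ := xiR m n η su sv with hξdef
  set f : ℝ := (⌊ξ⌋ : ℝ) with hf
  have hmn : (0 : ℝ) < m := by exact_mod_cast hm
  have hnn : (0 : ℝ) < n := by exact_mod_cast hn
  have hD : (0 : ℝ) < (m : ℝ) + η * n := by positivity
  have hf2 : f ≤ ξ := Int.floor_le ξ
  have hf1 : ξ - 1 < f := Int.sub_one_lt_floor ξ
  have hst : sigmaZ (tvec m n η u v) = su + sv + ((n : ℝ) - m) * f :=
    sigmaZ_tvec m n η u v
  have hxi : ((m : ℝ) + η * n) * ξ = su - η * sv := by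
    rw [hξdef]; unfold xiR; field_simp
  have key : (η + 1) * ((n : ℝ) * su + (m : ℝ) * sv) ≤
      ((m : ℝ) + η * n) * (su + sv + ((n : ℝ) - m) * f)
        + ((m : ℝ) + η * n) * ((m : ℝ) + n) := by
    nlinarith [mul_nonneg (mul_nonneg hD.le hnn.le) (by linarith : (0:ℝ) ≤ f - ξ + 1),
      mul_nonneg (mul_nonneg hD.le hmn.le) (by linarith : (0:ℝ) ≤ ξ - f),
      mul_nonneg hD.le hmn.le, hxi]
  have hA : (τ * (η + 1) / ((m : ℝ) + η * n)) * ((n : ℝ) * su)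
      + (τ * (η + 1) / ((m : ℝ) + η * n)) * ((m : ℝ) * sv)
      ≤ τ * (su + sv + ((n : ℝ) - m) * f) + τ * ((m : ℝ) + n) := by
    rw [div_mul_eq_mul_div, div_mul_eq_mul_div, ← add_div, div_le_iff₀ hD]
    nlinarith [mul_le_mul_of_nonneg_left key hτ.le]
  rw [hst]
  linarith [hA]

/-- The series `Σ_{t ∈ T} e^{-τ σ(t)}` converges for every `τ > 0`. -/
theorem summable_exp_neg_sigmaT (m n : ℕ) (hm : 0 < m) (hn : 0 < n) (η : ℝ) (hη : 0 < η)
    (τ : ℝ) (hτ : 0 < τ) :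
    Summable (fun t : Tset m n η => Real.exp (-τ * sigmaZ t.val)) := by
  classical
  set c : ℝ := τ * (η + 1) / ((m : ℝ) + η * n) with hc
  set F : ((Fin m → ℕ) × (Fin n → ℕ)) → ℝ := fun p =>
    Real.exp (τ * (m + n)) * Real.exp (-c * ((n : ℝ) * sigmaN p.1))
      * Real.exp (-c * ((m : ℝ) * sigmaN p.2)) with hF
  have hmn : (0 : ℝ) < m := by exact_mod_cast hm
  have hnn : (0 : ℝ) < n := by exact_mod_cast hn
  have hcpos : 0 < c := by rw [hc]; positivity
  -- summability of F over the whole product space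
  have hr1 : Summable (fun a : Fin m → ℕ => Real.exp (τ * (m + n)) *
      (Real.exp (-(c * n))) ^ (∑ j, a j)) := by
    apply Summable.mul_left
    exact summable_pow_sum m _ (Real.exp_nonneg _)
      (Real.exp_lt_one_iff.mpr (by nlinarith))
  have hr2 : Summable (fun b : Fin n → ℕ => (Real.exp (-(c * m))) ^ (∑ i, b i)) :=
    summable_pow_sum n _ (Real.exp_nonneg _)
      (Real.exp_lt_one_iff.mpr (by nlinarith))
  have hFsum : Summable F := by
    have := hr1.mul_of_nonneg hr2
      (fun a => by positivity) (fun b => by positivity)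
    refine this.congr fun p => ?_
    rw [hF]
    simp only []
    rw [← Real.exp_nat_mul, ← Real.exp_nat_mul]
    congr 2
    · rw [sigmaN]; push_cast; ring
    · rw [sigmaN]; push_cast; ring
  -- section: choose a witness for each t ∈ T
  set sec : Tset m n η → ((Fin m → ℕ) × (Fin n → ℕ)) := fun t =>
    (t.2.choose, t.2.choose_spec.choose) with hsec
  have hsec_spec : ∀ t : Tset m n η, t.val = tvec m n η (sec t).1 (sec t).2 :=
    fun t => t.2.choose_spec.choose_spec.2
  have hinj : Function.Injective sec := by
    intro t1 t2 h
    apply Subtype.ext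
    rw [hsec_spec t1, hsec_spec t2, h]
  have hcomp : Summable (F ∘ sec) := hFsum.comp_injective hinj
  refine Summable.of_nonneg_of_le (fun t => (Real.exp_pos _).le) (fun t => ?_) hcomp
  rw [hsec_spec t]
  exact key_bound m n hm hn η hη τ hτ (sec t).1 (sec t).2
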